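/- With d as in the balancing equation and R defined by d = 2R sin(π/K), one has R = (m/(2π)) K ln K + (1/(2π))(m − (N−3)/2) K ln(m ln K) + O(K) as K → ∞. -/

import Mathlib

open Filter Real

set_option maxHeartbeats 1000000 in
theorem stmt_9 (N : ℕ) (Ψ : ℝ → ℝ) (c a₀ m : ℝ)
    (hc : 0 < c) (ha : 0 < a₀) (hm : 0 < m)
    (hΨ : ∃ C s₀ : ℝ, 0 < s₀ ∧ ∀ s : ℝ, s₀ ≤ s →
      |Ψ s - c * s ^ (-((N : ℝ) - 1) / 2) * Real.exp (-s)|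
        ≤ (C / s) * (c * s ^ (-((N : ℝ) - 1) / 2) * Real.exp (-s)))
    (d R : ℕ → ℝ)
    (hbal : ∀ᶠ K : ℕ in atTop,
      d K ^ (m + 1) * Ψ (d K) = a₀ * m * (2 * Real.sin (π / K)) ^ m)
    (hR : ∀ᶠ K : ℕ in atTop, d K = 2 * R K * Real.sin (π / K))
    (hd : Tendsto d atTop atTop) :
    ∃ C : ℝ, ∀ᶠ K : ℕ in atTop,
      |R K - ((m / (2 * π)) * K * Real.log K
          + (1 / (2 * π)) * (m - ((N : ℝ) - 3) / 2) * K * Real.log (m * Real.log K))|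
        ≤ C * K := by
  obtain ⟨C, s₀, hs₀, hC⟩ := hΨ
  have hπ := Real.pi_pos
  have hπ3 := Real.pi_gt_three
  have hπ4 := Real.pi_le_four
  set μ : ℝ := m - ((N : ℝ) - 3) / 2 with hμdef
  set A : ℝ := |Real.log c| + Real.log 2 + |Real.log a₀| + |Real.log m| + m * Real.log (2 * π)
    with hAdef
  have hApos : 0 < A := by
    have h2π : 0 < Real.log (2 * π) := Real.log_pos (by linarith)
    have h1 := abs_nonneg (Real.log c); have h2 := abs_nonneg (Real.log a₀)
    have h3 := abs_nonneg (Real.log m)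
    have hl2 : 0 < Real.log 2 := Real.log_pos (by norm_num)
    have h4 := mul_pos hm h2π
    rw [hAdef]; linarith
  -- Step 1 : the logarithmic balancing relation
  have step1 : ∀ᶠ K : ℕ in atTop,
      |d K - μ * Real.log (d K) - m * Real.log K| ≤ A := by
    have hdbig : ∀ᶠ K : ℕ in atTop, max s₀ (max (2 * max C 1) 1) ≤ d K :=
      hd.eventually (eventually_ge_atTop _)
    filter_upwards [hbal, hdbig, eventually_ge_atTop 4] with K hKbal hKd hK4
    have hC'pos : (0:ℝ) < max C 1 := lt_of_lt_of_le one_pos (le_max_right _ _)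
    have hds₀ : s₀ ≤ d K := le_trans (le_max_left _ _) hKd
    have hd2C : 2 * max C 1 ≤ d K :=
      le_trans (le_trans (le_max_left _ _) (le_max_right _ _)) hKd
    have hd1 : (1:ℝ) ≤ d K :=
      le_trans (le_trans (le_max_right _ _) (le_max_right _ _)) hKd
    have hdpos : 0 < d K := lt_of_lt_of_le one_pos hd1
    have hKR : (4:ℝ) ≤ (K:ℝ) := by exact_mod_cast hK4
    have hKpos : (0:ℝ) < (K:ℝ) := by linarith
    set x := π / (K:ℝ) with hxdef
    have hxpos : 0 < x := by positivity
    have hx1 : x ≤ 1 := by rw [hxdef, div_le_one hKpos]; linarith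
    have hKx : (K:ℝ) * x = π := by rw [hxdef]; field_simp
    set s := Real.sin x with hsdef
    have hslt : s < x := Real.sin_lt hxpos
    have hsgt : x - x ^ 3 / 4 < s := by
      have h := Real.sin_gt_sub_cube hxpos; have h3 := pow_pos hxpos 3; linarith
    have hx3 : x ^ 3 ≤ x := by
      have h := mul_nonneg hxpos.le
        (mul_nonneg (sub_nonneg.2 hx1) (by linarith : (0:ℝ) ≤ 1 + x))
      linarith [h]
    have hsx : 3 * x / 4 ≤ s := by linarith
    have hspos : 0 < s := by linarith
    have hKs : 3 * π / 4 ≤ (K:ℝ) * s := by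
      have h1 := mul_le_mul_of_nonneg_left hsx hKpos.le
      have h2 : (K:ℝ) * (3 * x / 4) = 3 * ((K:ℝ) * x) / 4 := by ring
      rw [h2, hKx] at h1; exact h1
    have hKs2 : (K:ℝ) * s ≤ π := by
      have h1 := mul_le_mul_of_nonneg_left hslt.le hKpos.le
      rw [hKx] at h1; exact h1
    set F : ℝ := c * d K ^ (-((N : ℝ) - 1) / 2) * Real.exp (-(d K)) with hFdef
    have hFpos : 0 < F := by rw [hFdef]; positivity
    have hbound := hC (d K) hds₀
    rw [← hFdef] at hbound
    have hbound2 : |Ψ (d K) - F| ≤ (1/2) * F := by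
      refine le_trans hbound ?_
      have h1 : C / d K ≤ 1/2 := by
        rw [div_le_iff₀ hdpos]
        have h2 : C ≤ max C 1 := le_max_left _ _
        linarith
      have := mul_le_mul_of_nonneg_right h1 hFpos.le
      linarith
    have habs := abs_le.mp hbound2
    have hΨlow : (1/2) * F ≤ Ψ (d K) := by linarith
    have hΨhigh : Ψ (d K) ≤ (3/2) * F := by linarith
    have hΨpos : 0 < Ψ (d K) := by linarith
    set q : ℝ := Ψ (d K) / F with hqdef
    have hqpos : 0 < q := div_pos hΨpos hFpos
    have hq1 : 1/2 ≤ q := by rw [hqdef, le_div_iff₀ hFpos]; linarith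
    have hq2 : q ≤ 2 := by rw [hqdef, div_le_iff₀ hFpos]; linarith
    have hlogq : |Real.log q| ≤ Real.log 2 := by
      rw [abs_le]
      constructor
      · have h1 : Real.log (1/2) ≤ Real.log q := Real.log_le_log (by norm_num) hq1
        have h2 : Real.log (1/2) = -Real.log 2 := by
          rw [one_div, Real.log_inv]
        linarith
      · exact Real.log_le_log hqpos hq2
    have hΨeq : Ψ (d K) = F * q := by
      rw [hqdef]; field_simp
    -- take logarithms of the balancing equation
    have h0 : Real.log (d K ^ (m + 1) * Ψ (d K)) = Real.log (a₀ * m * (2 * s) ^ m) := by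
      rw [hKbal]
    have hlhs : Real.log (d K ^ (m + 1) * Ψ (d K))
        = (m + 1) * Real.log (d K) + (Real.log c + (-((N : ℝ) - 1) / 2) * Real.log (d K)
            - d K + Real.log q) := by
      rw [Real.log_mul (by positivity) hΨpos.ne', Real.log_rpow hdpos, hΨeq,
        Real.log_mul hFpos.ne' hqpos.ne', hFdef,
        Real.log_mul (by positivity) (Real.exp_pos _).ne',
        Real.log_mul hc.ne' (by positivity), Real.log_rpow hdpos, Real.log_exp]
      ring
    have hrhs : Real.log (a₀ * m * (2 * s) ^ m)
        = Real.log a₀ + Real.log m + m * Real.log (2 * s) := by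
      rw [Real.log_mul (by positivity) (by positivity), Real.log_mul ha.ne' hm.ne',
        Real.log_rpow (by positivity)]
    rw [hlhs, hrhs] at h0
    -- split log(2s) = log(2Ks) - log K
    have hlog2s : Real.log (2 * s) = Real.log (2 * (K:ℝ) * s) - Real.log K := by
      rw [show 2 * (K:ℝ) * s = (K:ℝ) * (2 * s) by ring,
        Real.log_mul hKpos.ne' (by positivity)]
      ring
    have hB1 : 0 ≤ Real.log (2 * (K:ℝ) * s) := by
      apply Real.log_nonneg; linarith [hKs, hπ3]
    have hB2 : Real.log (2 * (K:ℝ) * s) ≤ Real.log (2 * π) := by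
      apply Real.log_le_log (by linarith [hKs, hπ3])
      linarith [hKs2]
    -- assemble
    have key : d K - μ * Real.log (d K) - m * Real.log K
        = Real.log c + Real.log q - Real.log a₀ - Real.log m
          - m * Real.log (2 * (K:ℝ) * s) := by
      rw [hlog2s] at h0
      rw [hμdef]
      linear_combination -h0
    rw [key, abs_le]
    have hlc1 := le_abs_self (Real.log c); have hlc2 := neg_abs_le (Real.log c)
    have hla1 := le_abs_self (Real.log a₀); have hla2 := neg_abs_le (Real.log a₀)
    have hlm1 := le_abs_self (Real.log m); have hlm2 := neg_abs_le (Real.log m)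
    have hlq := abs_le.mp hlogq
    have hmB1 : 0 ≤ m * Real.log (2 * (K:ℝ) * s) := mul_nonneg hm.le hB1
    have hmB2 : m * Real.log (2 * (K:ℝ) * s) ≤ m * Real.log (2 * π) :=
      mul_le_mul_of_nonneg_left hB2 hm.le
    constructor <;> (rw [hAdef]; linarith)
  -- eventual smallness of log compared to identity
  have hμd : ∀ᶠ K : ℕ in atTop, |μ| * Real.log (d K) ≤ d K / 2 ∧ 1 ≤ d K := by
    refine hd.eventually (p := fun t : ℝ => |μ| * Real.log t ≤ t / 2 ∧ 1 ≤ t) ?_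
    have hb := Real.isLittleO_log_id_atTop.bound
      (show (0:ℝ) < 1 / (2 * (|μ| + 1)) by positivity)
    filter_upwards [hb, eventually_ge_atTop (1:ℝ)] with t ht ht1
    refine ⟨?_, ht1⟩
    have htpos : (0:ℝ) < t := by linarith
    simp only [Real.norm_eq_abs, id_eq] at ht
    rw [abs_of_pos htpos] at ht
    have hlt : Real.log t ≤ |Real.log t| := le_abs_self _
    have hμ0 : (0:ℝ) ≤ |μ| := abs_nonneg μ
    have h1 : |μ| * Real.log t ≤ |μ| * (1 / (2 * (|μ| + 1)) * t) := by
      apply mul_le_mul_of_nonneg_left _ hμ0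
      calc Real.log t ≤ |Real.log t| := hlt
        _ ≤ 1 / (2 * (|μ| + 1)) * t := ht
    have h2 : |μ| * (1 / (2 * (|μ| + 1)) * t) ≤ t / 2 := by
      have e : |μ| * (1 / (2 * (|μ| + 1)) * t) = |μ| * t / (2 * (|μ| + 1)) := by ring
      rw [e, div_le_div_iff₀ (by positivity) (by norm_num : (0:ℝ) < 2)]
      linarith [mul_nonneg hμ0 htpos.le]
    linarith
  -- eventual conditions on L = log K
  have hc3 : ∀ᶠ L : ℝ in atTop,
      |μ| * Real.log (2 * m * L + 2 * A) + A ≤ m / 2 * L ∧ 2 * A ≤ m * L ∧ 1 ≤ m * L := by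
    have hb := Real.isLittleO_log_id_atTop.bound
      (show (0:ℝ) < m / (8 * (|μ| + 1)) by positivity)
    filter_upwards [hb, eventually_ge_atTop (2*m+1), eventually_ge_atTop (2*A),
      eventually_ge_atTop (1:ℝ), eventually_ge_atTop (4*A/m),
      eventually_ge_atTop (2*A/m), eventually_ge_atTop (1/m)] with L hL h1 h2 h3 h4 h5 h6
    have hLpos : (0:ℝ) < L := by linarith
    simp only [Real.norm_eq_abs, id_eq] at hL
    rw [abs_of_pos hLpos] at hL
    have hmL1 : 1 ≤ m * L := by
      have h7 := mul_le_mul_of_nonneg_left h6 hm.le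
      have h8 : m * (1 / m) = 1 := by field_simp
      rw [h8] at h7; exact h7
    have hmL2 : 2 * A ≤ m * L := by
      have h7 := mul_le_mul_of_nonneg_left h5 hm.le
      have h8 : m * (2 * A / m) = 2 * A := by field_simp
      rw [h8] at h7; exact h7
    refine ⟨?_, hmL2, hmL1⟩
    have hquad : 2 * m * L + 2 * A ≤ L ^ 2 := by
      have h7 := mul_le_mul_of_nonneg_right h1 hLpos.le
      linarith [h7, h2]
    have hpos2 : (0:ℝ) < 2 * m * L + 2 * A := by
      have h7 := mul_le_mul_of_nonneg_left h3 hm.le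
      rw [mul_one] at h7; linarith
    have hlog1 : Real.log (2 * m * L + 2 * A) ≤ 2 * Real.log L := by
      have h7 := Real.log_le_log hpos2 hquad
      rwa [show L ^ 2 = L * L by ring, Real.log_mul hLpos.ne' hLpos.ne',
        ← two_mul] at h7
    have hμ0 : (0:ℝ) ≤ |μ| := abs_nonneg μ
    have hlogL : Real.log L ≤ m / (8 * (|μ| + 1)) * L := by
      calc Real.log L ≤ |Real.log L| := le_abs_self _
        _ ≤ m / (8 * (|μ| + 1)) * L := hL
    have h7 : |μ| * Real.log (2 * m * L + 2 * A) ≤ |μ| * (2 * Real.log L) :=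
      mul_le_mul_of_nonneg_left hlog1 hμ0
    have h8 : |μ| * (2 * Real.log L) ≤ 2 * |μ| * (m / (8 * (|μ| + 1)) * L) := by
      have h9 := mul_le_mul_of_nonneg_left hlogL (by positivity : (0:ℝ) ≤ 2 * |μ|)
      linarith [h9]
    have h9 : 2 * |μ| * (m / (8 * (|μ| + 1)) * L) ≤ m / 4 * L := by
      have e : 2 * |μ| * (m / (8 * (|μ| + 1)) * L) = 2 * |μ| * m * L / (8 * (|μ| + 1)) := by
        ring
      rw [e, div_le_iff₀ (by positivity)]
      have h11 := mul_nonneg hm.le hLpos.le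
      nlinarith [h11]
    have hA4 : A ≤ m / 4 * L := by
      have h7 := mul_le_mul_of_nonneg_left h4 hm.le
      have h8 : m * (4 * A / m) = 4 * A := by field_simp
      rw [h8] at h7; linarith
    linarith
  have hLK : Tendsto (fun K : ℕ => Real.log K) atTop atTop :=
    Real.tendsto_log_atTop.comp tendsto_natCast_atTop_atTop
  have hc3K := hLK.eventually hc3
  -- Step 1b : two-term asymptotics of d
  have step1b : ∀ᶠ K : ℕ in atTop,
      |d K - (m * Real.log K + μ * Real.log (m * Real.log K))| ≤ A + |μ| * Real.log 3 := by
    filter_upwards [step1, hμd, hc3K] with K h1 h2 h3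
    obtain ⟨h2a, h2b⟩ := h2
    obtain ⟨h3a, h3b, h3c⟩ := h3
    set L := Real.log (K:ℝ) with hLdef
    set t := d K with htdef
    have hmL : 0 < m * L := lt_of_lt_of_le one_pos h3c
    have hLpos : 0 < L := by
      have h := div_pos hmL hm
      rwa [mul_div_cancel_left₀ _ hm.ne'] at h
    have hlt : 0 ≤ Real.log t := Real.log_nonneg h2b
    have htpos : 0 < t := by linarith
    have habs := abs_le.mp h1
    have hμlt1 : μ * Real.log t ≤ |μ| * Real.log t :=
      mul_le_mul_of_nonneg_right (le_abs_self μ) hlt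
    have hμlt2 : -(|μ| * Real.log t) ≤ μ * Real.log t := by
      have h := mul_le_mul_of_nonneg_right (neg_abs_le μ) hlt
      linarith [h]
    have hup : t ≤ 2 * m * L + 2 * A := by linarith
    have hlogup : Real.log t ≤ Real.log (2 * m * L + 2 * A) :=
      Real.log_le_log htpos hup
    have hμabs : |μ| * Real.log t ≤ |μ| * Real.log (2 * m * L + 2 * A) :=
      mul_le_mul_of_nonneg_left hlogup (abs_nonneg μ)
    have hlow : m * L / 2 ≤ t := by linarith
    have hr1 : 1/2 ≤ t / (m * L) := by rw [le_div_iff₀ hmL]; linarith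
    have hr2 : t / (m * L) ≤ 3 := by rw [div_le_iff₀ hmL]; linarith
    have hratio : Real.log (t / (m * L)) = Real.log t - Real.log (m * L) :=
      Real.log_div htpos.ne' hmL.ne'
    have habs3 : |Real.log t - Real.log (m * L)| ≤ Real.log 3 := by
      rw [← hratio, abs_le]
      constructor
      · have ha1 : Real.log (1/2) ≤ Real.log (t / (m * L)) :=
          Real.log_le_log (by norm_num) hr1
        have ha2 : Real.log (1/2) = -Real.log 2 := by rw [one_div, Real.log_inv]
        have ha3 : Real.log 2 ≤ Real.log 3 := Real.log_le_log (by norm_num) (by norm_num)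
        linarith
      · exact Real.log_le_log (by positivity) hr2
    have h5 : |μ * (Real.log t - Real.log (m * L))| ≤ |μ| * Real.log 3 := by
      rw [abs_mul]
      exact mul_le_mul_of_nonneg_left habs3 (abs_nonneg μ)
    have hsplit : t - (m * L + μ * Real.log (m * L))
        = (t - μ * Real.log t - m * L) + μ * (Real.log t - Real.log (m * L)) := by ring
    rw [hsplit]
    exact le_trans (abs_add_le _ _) (add_le_add h1 h5)
  -- Step 2 : conclude
  refine ⟨(A + |μ| * Real.log 3) + (1 + |μ|) * m * π / 4, ?_⟩
  filter_upwards [step1b, hR, eventually_ge_atTop 4, hc3K] with K h1 hRK hK4 h3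
  have hKR : (4:ℝ) ≤ (K:ℝ) := by exact_mod_cast hK4
  have hKpos : (0:ℝ) < (K:ℝ) := by linarith
  set L := Real.log (K:ℝ) with hLdef
  have hmL1 : 1 ≤ m * L := h3.2.2
  have hmL : 0 < m * L := lt_of_lt_of_le one_pos hmL1
  have hLpos : 0 < L := by
    have h := div_pos hmL hm
    rwa [mul_div_cancel_left₀ _ hm.ne'] at h
  have hLleK : L ≤ (K:ℝ) := by
    have h := Real.log_le_sub_one_of_pos hKpos
    rw [← hLdef] at h; linarith
  set x := π / (K:ℝ) with hxdef
  have hxpos : 0 < x := by positivity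
  have hx1 : x ≤ 1 := by rw [hxdef, div_le_one hKpos]; linarith
  have hKx : (K:ℝ) * x = π := by rw [hxdef]; field_simp
  set s := Real.sin x with hsdef
  have hslt : s < x := Real.sin_lt hxpos
  have hsgt : x - x ^ 3 / 4 < s := by
    have h := Real.sin_gt_sub_cube hxpos; have h3 := pow_pos hxpos 3; linarith
  have hx3 : x ^ 3 ≤ x := by
    have h := mul_nonneg hxpos.le
      (mul_nonneg (sub_nonneg.2 hx1) (by linarith : (0:ℝ) ≤ 1 + x))
    linarith [h]
  have hsx : 3 * x / 4 ≤ s := by linarith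
  have hspos : 0 < s := by linarith
  have hKs : 3 * π / 4 ≤ (K:ℝ) * s := by
    have h1' := mul_le_mul_of_nonneg_left hsx hKpos.le
    have h2' : (K:ℝ) * (3 * x / 4) = 3 * ((K:ℝ) * x) / 4 := by ring
    rw [h2', hKx] at h1'; exact h1'
  have hKs2 : (K:ℝ) * s ≤ π := by
    have h1' := mul_le_mul_of_nonneg_left hslt.le hKpos.le
    rw [hKx] at h1'; exact h1'
  set D : ℝ := m * L + μ * Real.log (m * L) with hDdef
  have hRval : R K = d K / (2 * s) := by
    rw [eq_div_iff (by positivity)]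
    linear_combination -hRK
  have hC₀ : (0:ℝ) ≤ A + |μ| * Real.log 3 := by
    have h1' : (0:ℝ) ≤ Real.log 3 := Real.log_nonneg (by norm_num)
    have h2' := mul_nonneg (abs_nonneg μ) h1'
    linarith
  have hsplit : R K - ((m / (2 * π)) * K * L + (1 / (2 * π)) * μ * K * Real.log (m * L))
      = (d K - D) / (2 * s) + D * (1 / (2 * s) - (K:ℝ) / (2 * π)) := by
    rw [hRval, hDdef]; ring
  rw [hsplit]
  -- bound the first term
  have hbnd1 : |(d K - D) / (2 * s)| ≤ (A + |μ| * Real.log 3) * K := by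
    rw [abs_div, abs_of_pos (by positivity : (0:ℝ) < 2 * s), div_le_iff₀ (by positivity)]
    have hmul2 := mul_nonneg hC₀ (by linarith : (0:ℝ) ≤ 3 / 2 * π - 1)
    calc |d K - D| ≤ A + |μ| * Real.log 3 := h1
      _ ≤ (A + |μ| * Real.log 3) * (3 / 2 * π) := by linarith [hmul2]
      _ ≤ (A + |μ| * Real.log 3) * (2 * ((K:ℝ) * s)) := by
          apply mul_le_mul_of_nonneg_left _ hC₀
          linarith [hKs]
      _ = (A + |μ| * Real.log 3) * (K:ℝ) * (2 * s) := by ring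
  -- bound |D|
  have hlmL0 : 0 ≤ Real.log (m * L) := Real.log_nonneg hmL1
  have hlmLle : Real.log (m * L) ≤ m * L := by
    have h := Real.log_le_sub_one_of_pos hmL; linarith
  have hDb : |D| ≤ (1 + |μ|) * m * (K:ℝ) := by
    have hb1 : μ * Real.log (m * L) ≤ |μ| * Real.log (m * L) :=
      mul_le_mul_of_nonneg_right (le_abs_self μ) hlmL0
    have hb2 : -(|μ| * Real.log (m * L)) ≤ μ * Real.log (m * L) := by
      have h := mul_le_mul_of_nonneg_right (neg_abs_le μ) hlmL0
      linarith [h]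
    have hb3 : |μ| * Real.log (m * L) ≤ |μ| * (m * L) :=
      mul_le_mul_of_nonneg_left hlmLle (abs_nonneg μ)
    have hb4 : (1 + |μ|) * (m * L) ≤ (1 + |μ|) * (m * (K:ℝ)) := by
      apply mul_le_mul_of_nonneg_left _ (by positivity)
      exact mul_le_mul_of_nonneg_left hLleK hm.le
    rw [hDdef, abs_le]
    constructor <;> linarith [hb1, hb2, hb3, hb4, hmL.le]
  -- bound the second factor
  have heq2 : 1 / (2 * s) - (K:ℝ) / (2 * π) = (π - (K:ℝ) * s) / (2 * π * s) := by
    field_simp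
  have hb2' : (π - (K:ℝ) * s) / (2 * π * s) ≤ π / (4 * K) := by
    rw [div_le_div_iff₀ (by positivity) (by positivity)]
    have h1' : π - (K:ℝ) * s ≤ (K:ℝ) * x ^ 3 / 4 := by
      have hmul := mul_lt_mul_of_pos_left hsgt hKpos
      have he : (K:ℝ) * (x - x ^ 3 / 4) = (K:ℝ) * x - (K:ℝ) * x ^ 3 / 4 := by ring
      rw [he, hKx] at hmul
      linarith
    have h1'' := mul_le_mul_of_nonneg_right h1' (by positivity : (0:ℝ) ≤ 4 * (K:ℝ) ^ 2)
    have h2'' : (K:ℝ) ^ 2 * ((K:ℝ) * x ^ 3) = π ^ 3 := by rw [← hKx]; ring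
    have h3'' := mul_le_mul_of_nonneg_left hKs (by positivity : (0:ℝ) ≤ 2 * π ^ 2)
    have P : (π - (K:ℝ) * s) * (4 * (K:ℝ)) * (K:ℝ) ≤ π * (2 * π * s) * (K:ℝ) := by
      linarith [h1'', h2'', h3'', (by positivity : (0:ℝ) < π ^ 3)]
    exact (mul_le_mul_iff_of_pos_right hKpos).mp P
  have hw0 : 0 ≤ 1 / (2 * s) - (K:ℝ) / (2 * π) := by
    rw [heq2]
    apply div_nonneg (by linarith) (by positivity)
  have habs2 : |1 / (2 * s) - (K:ℝ) / (2 * π)| ≤ π / (4 * K) := by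
    rw [abs_of_nonneg hw0, heq2]; exact hb2'
  have hbnd2 : |D * (1 / (2 * s) - (K:ℝ) / (2 * π))| ≤ (1 + |μ|) * m * π / 4 := by
    rw [abs_mul]
    calc |D| * |1 / (2 * s) - (K:ℝ) / (2 * π)|
        ≤ ((1 + |μ|) * m * (K:ℝ)) * (π / (4 * K)) := by
          apply mul_le_mul hDb habs2 (abs_nonneg _) (by positivity)
      _ = (1 + |μ|) * m * π / 4 := by
          field_simp
  have hfin : (1 + |μ|) * m * π / 4 ≤ ((1 + |μ|) * m * π / 4) * K := by
    have h0' : (0:ℝ) ≤ (1 + |μ|) * m * π / 4 := by positivity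
    have h1' := mul_nonneg h0' (by linarith : (0:ℝ) ≤ (K:ℝ) - 1)
    linarith [h1']
  calc |(d K - D) / (2 * s) + D * (1 / (2 * s) - (K:ℝ) / (2 * π))|
      ≤ |(d K - D) / (2 * s)| + |D * (1 / (2 * s) - (K:ℝ) / (2 * π))| := abs_add_le _ _
    _ ≤ (A + |μ| * Real.log 3) * K + ((1 + |μ|) * m * π / 4) * K := by linarith
    _ = ((A + |μ| * Real.log 3) + (1 + |μ|) * m * π / 4) * K := by ring
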